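/- arXiv:2512.14987 — 2 statements merged into one kernel-verified Lean document; each statement's English description precedes it below -/
import Mathlib

section
/- Suppose (s,t) ∈ ℝ₊ × ℝ₊ solves the system s = (M(s,t)·binom(N,k)/λ)^{−1/k}·‖U_{R,x₀}‖_{L^p(B_R(x₀))} and t = (M(s,t)·binom(N,k)/λ)^{−1/k}·‖∇U_{R,x₀}‖_{L^q(B_R(x₀))}. Then the function u(x) = s·U_{R,x₀}(x)/‖U_{R,x₀}‖_{L^p(B_R(x₀))} satisfies M(‖u‖_{L^p}, ‖∇u‖_{L^q})·S_k(D²u) = λ in B_R(x₀), u = 0 on the boundary, and ∂u/∂ν is a positive constant on the boundary. -/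
open MeasureTheory Metric
open scoped ENNReal

/-- The Hessian matrix of `u` at `x`. -/
noncomputable def hess {N : ℕ} (u : EuclideanSpace ℝ (Fin N) → ℝ)
    (x : EuclideanSpace ℝ (Fin N)) : Matrix (Fin N) (Fin N) ℝ :=
  fun i j => fderiv ℝ (fun y => fderiv ℝ u y (EuclideanSpace.single i 1)) x
    (EuclideanSpace.single j 1)

/-- The k-th elementary symmetric function of the eigenvalues of a matrix, via the
characteristic polynomial. -/
noncomputable def Sk {N : ℕ} (k : ℕ) (A : Matrix (Fin N) (Fin N) ℝ) : ℝ :=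
  (-1) ^ k * (Matrix.charpoly A).coeff (N - k)

open Polynomial in
lemma Sk_smul_one {N : ℕ} (k : ℕ) (hkN : k ≤ N) (c : ℝ) :
    Sk k (c • (1 : Matrix (Fin N) (Fin N) ℝ)) = (N.choose k : ℝ) * c ^ k := by
  have h2 : (c • (1 : Matrix (Fin N) (Fin N) ℝ)).charpoly = (X - C c) ^ N := by
    rw [Matrix.smul_one_eq_diagonal,
      Matrix.charpoly_of_upperTriangular _ (Matrix.blockTriangular_diagonal _)]
    simp [Finset.prod_const]
  have h3 : ((-1 : ℝ)) ^ k * (-c) ^ k = c ^ k := by rw [← mul_pow]; ring_nf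
  rw [Sk, h2, sub_eq_add_neg, ← C_neg, coeff_X_add_C_pow,
    Nat.sub_sub_self hkN, Nat.choose_symm hkN, ← mul_assoc, h3]
  ring

lemma hasFDerivAt_Ufun {N : ℕ} (x₀ x : EuclideanSpace ℝ (Fin N)) (R : ℝ) :
    HasFDerivAt (fun y : EuclideanSpace ℝ (Fin N) => (‖y - x₀‖ ^ 2 - R ^ 2) / 2)
      ((innerSL ℝ) (x - x₀)) x := by
  have h1 : HasFDerivAt (fun y : EuclideanSpace ℝ (Fin N) => y - x₀)
      (ContinuousLinearMap.id ℝ _) x := (hasFDerivAt_id x).sub_const x₀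
  have h2 := ((h1.inner ℝ h1).sub_const (R ^ 2)).const_smul (2⁻¹ : ℝ)
  have hf : (fun y : EuclideanSpace ℝ (Fin N) => (‖y - x₀‖ ^ 2 - R ^ 2) / 2)
      = (2⁻¹ : ℝ) • fun y => inner ℝ (y - x₀) (y - x₀) - R ^ 2 := by
    funext y
    simp only [Pi.smul_apply]
    rw [real_inner_self_eq_norm_sq, smul_eq_mul]; ring
  rw [hf]
  refine h2.congr_fderiv ?_
  · ext z
    simp only [ContinuousLinearMap.smul_apply, ContinuousLinearMap.coe_comp', Function.comp_apply,
      ContinuousLinearMap.prod_apply, fderivInnerCLM_apply, ContinuousLinearMap.id_apply,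
      innerSL_apply_apply, smul_eq_mul]
    rw [real_inner_comm]
    ring

lemma hasFDerivAt_scaled {N : ℕ} (c₀ : ℝ) (x₀ : EuclideanSpace ℝ (Fin N)) (R : ℝ)
    (u : EuclideanSpace ℝ (Fin N) → ℝ)
    (hu : ∀ y, u y = c₀ * ((‖y - x₀‖ ^ 2 - R ^ 2) / 2)) (x : EuclideanSpace ℝ (Fin N)) :
    HasFDerivAt u (c₀ • (innerSL ℝ) (x - x₀)) x := by
  have := (hasFDerivAt_Ufun x₀ x R).const_mul c₀
  rw [show u = _ from funext hu]
  exact this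

lemma hess_scaled {N : ℕ} (c₀ : ℝ) (x₀ : EuclideanSpace ℝ (Fin N)) (R : ℝ)
    (u : EuclideanSpace ℝ (Fin N) → ℝ)
    (hu : ∀ y, u y = c₀ * ((‖y - x₀‖ ^ 2 - R ^ 2) / 2)) (x : EuclideanSpace ℝ (Fin N)) :
    hess u x = c₀ • (1 : Matrix (Fin N) (Fin N) ℝ) := by
  have hfd : ∀ y, fderiv ℝ u y = c₀ • (innerSL ℝ) (y - x₀) := fun y =>
    (hasFDerivAt_scaled c₀ x₀ R u hu y).fderiv
  funext i j
  show fderiv ℝ (fun y => fderiv ℝ u y (EuclideanSpace.single i 1)) x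
      (EuclideanSpace.single j 1) = _
  have hinner : ∀ y : EuclideanSpace ℝ (Fin N),
      fderiv ℝ u y (EuclideanSpace.single i 1)
        = c₀ * (innerSL ℝ) (EuclideanSpace.single i (1:ℝ)) (y - x₀) := by
    intro y
    rw [hfd y]
    simp only [ContinuousLinearMap.smul_apply, innerSL_apply_apply, smul_eq_mul]
    rw [real_inner_comm]
  have hd2 : HasFDerivAt (fun y : EuclideanSpace ℝ (Fin N) =>
      c₀ * (innerSL ℝ) (EuclideanSpace.single i (1:ℝ)) (y - x₀))
      (c₀ • (innerSL ℝ) (EuclideanSpace.single i (1:ℝ))) x := by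
    have h1 : HasFDerivAt (fun y : EuclideanSpace ℝ (Fin N) => y - x₀)
        (ContinuousLinearMap.id ℝ _) x := (hasFDerivAt_id x).sub_const x₀
    have := (((innerSL ℝ) (EuclideanSpace.single i (1:ℝ))).hasFDerivAt.comp x h1).const_mul c₀
    exact this
  have : (fun y : EuclideanSpace ℝ (Fin N) => fderiv ℝ u y (EuclideanSpace.single i 1))
      = fun y => c₀ * (innerSL ℝ) (EuclideanSpace.single i (1:ℝ)) (y - x₀) := funext hinner
  rw [this, hd2.fderiv]
  simp only [ContinuousLinearMap.smul_apply, innerSL_apply_apply, smul_eq_mul, Matrix.smul_apply,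
    Matrix.one_apply, smul_eq_mul]
  rw [EuclideanSpace.inner_single_left]
  by_cases h : i = j <;> simp [h, EuclideanSpace.single_apply]

theorem stmt_3 {N : ℕ} (hN : 1 ≤ N) (k : ℕ) (hk : 1 ≤ k) (hkN : k ≤ N)
    (R : ℝ) (hR : 0 < R) (x₀ : EuclideanSpace ℝ (Fin N))
    (p q : ℝ≥0∞) (hp : 0 < p) (hq : 0 < q) (lam : ℝ) (hlam : 0 < lam)
    (M : ℝ → ℝ → ℝ) (hM : ∀ s t : ℝ, 0 < M s t)
    (U : EuclideanSpace ℝ (Fin N) → ℝ) (hU : ∀ x, U x = (‖x - x₀‖ ^ 2 - R ^ 2) / 2)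
    -- the L^p norm of U and the L^q norm of |∇U| over the ball
    (A B : ℝ)
    (hA : A = (eLpNorm U p (volume.restrict (Metric.ball x₀ R))).toReal)
    (hB : B = (eLpNorm (fun y => ‖fderiv ℝ U y‖) q
        (volume.restrict (Metric.ball x₀ R))).toReal)
    -- (s, t) solves the system
    (s t : ℝ) (hs : 0 < s) (ht : 0 < t)
    (hsys1 : s = (M s t * (N.choose k : ℝ) / lam) ^ (-(1 : ℝ) / k) * A)
    (hsys2 : t = (M s t * (N.choose k : ℝ) / lam) ^ (-(1 : ℝ) / k) * B)
    (u : EuclideanSpace ℝ (Fin N) → ℝ) (hu : ∀ x, u x = s * U x / A) :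
    (∀ x ∈ Metric.ball x₀ R,
      M (eLpNorm u p (volume.restrict (Metric.ball x₀ R))).toReal
        (eLpNorm (fun y => ‖fderiv ℝ u y‖) q (volume.restrict (Metric.ball x₀ R))).toReal
        * Sk k (hess u x) = lam) ∧
    (∀ x ∈ Metric.sphere x₀ R, u x = 0) ∧
    (∃ c : ℝ, 0 < c ∧ ∀ x ∈ Metric.sphere x₀ R, fderiv ℝ u x (R⁻¹ • (x - x₀)) = c) := by
  have hk0 : (k : ℝ) ≠ 0 := Nat.cast_ne_zero.mpr (by omega)
  have hch : (0 : ℝ) < (N.choose k : ℝ) := Nat.cast_pos.mpr (Nat.choose_pos hkN)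
  set w : ℝ := M s t * (N.choose k : ℝ) / lam with hw
  have hwpos : 0 < w := div_pos (mul_pos (hM s t) hch) hlam
  set c : ℝ := w ^ (-(1 : ℝ) / k) with hcdef
  have hcpos : 0 < c := Real.rpow_pos_of_pos hwpos _
  have hA0 : 0 < A := by nlinarith [hsys1, mul_pos hcpos hs]
  have hAne : A ≠ 0 := ne_of_gt hA0
  set c₀ : ℝ := s / A with hc₀def
  have hc₀pos : 0 < c₀ := div_pos hs hA0
  have hc₀c : c₀ = c := by rw [hc₀def, hsys1]; field_simp
  have hu' : ∀ y, u y = c₀ * ((‖y - x₀‖ ^ 2 - R ^ 2) / 2) := by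
    intro y; rw [hu y, hU y, hc₀def]; ring
  -- the scaled ck power identity
  have hck : c ^ k = w⁻¹ := by
    rw [hcdef, ← Real.rpow_natCast (w ^ (-(1:ℝ)/k)) k, ← Real.rpow_mul hwpos.le]
    rw [show -(1:ℝ)/k * k = -1 by field_simp]
    rw [Real.rpow_neg_one]
  -- eLpNorm identities
  have hEU : (eLpNorm U p (volume.restrict (Metric.ball x₀ R))) ≠ ⊤ := by
    intro h; rw [hA, h] at hA0; simp at hA0
  have hu_smul : u = c₀ • U := by
    funext y; rw [hu y]; simp [hc₀def]; ring
  have hLp : (eLpNorm u p (volume.restrict (Metric.ball x₀ R))).toReal = s := by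
    rw [hu_smul, eLpNorm_const_smul, ENNReal.toReal_mul, ← hA]
    simp only [toReal_enorm, Real.norm_eq_abs, abs_of_pos hc₀pos]
    rw [hc₀def]; field_simp
  -- gradient of u
  have hfdu : ∀ y, fderiv ℝ u y = c₀ • (innerSL ℝ) (y - x₀) := fun y =>
    (hasFDerivAt_scaled c₀ x₀ R u hu' y).fderiv
  have hfdU : ∀ y, fderiv ℝ U y = (innerSL ℝ) (y - x₀) := by
    intro y
    have : HasFDerivAt U ((innerSL ℝ) (y - x₀)) y := by
      have h := hasFDerivAt_Ufun x₀ y R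
      convert h using 1
      funext z; exact hU z
    exact this.fderiv
  have hnorm_eq : (fun y => ‖fderiv ℝ u y‖)
      = c₀ • (fun y => ‖fderiv ℝ U y‖) := by
    funext y
    simp only [Pi.smul_apply]
    rw [hfdu y, hfdU y]
    simp [norm_smul, abs_of_pos hc₀pos]
  have hLq : (eLpNorm (fun y => ‖fderiv ℝ u y‖) q
      (volume.restrict (Metric.ball x₀ R))).toReal = t := by
    rw [hnorm_eq, eLpNorm_const_smul, ENNReal.toReal_mul, ← hB]
    simp only [toReal_enorm, Real.norm_eq_abs, abs_of_pos hc₀pos]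
    rw [hc₀c, hsys2]
  refine ⟨?_, ?_, ?_⟩
  · intro x hx
    rw [hLp, hLq, hess_scaled c₀ x₀ R u hu' x, Sk_smul_one k hkN c₀, hc₀c, hck]
    rw [hw]
    field_simp
    exact div_self (hM s t).ne'
  · intro x hx
    have hxn : ‖x - x₀‖ = R := by
      rw [← dist_eq_norm]; exact mem_sphere_iff_norm.mp hx ▸ rfl
    rw [hu x, hU x, hxn]
    simp
  · refine ⟨c₀ * R, mul_pos hc₀pos hR, ?_⟩
    intro x hx
    have hxn : ‖x - x₀‖ = R := by
      rw [← dist_eq_norm]; exact mem_sphere_iff_norm.mp hx ▸ rfl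
    rw [hfdu x]
    simp only [ContinuousLinearMap.smul_apply, innerSL_apply_apply, smul_eq_mul]
    rw [real_inner_smul_right, real_inner_self_eq_norm_sq, hxn]
    field_simp
end

section
/- For N ≥ 2, the function U(x) = (|x|^{−N} − |x|^{2−N})/2 is the unique C² solution on {|x| ≥ 1} of the exterior overdetermined problem Δu = N|x|^{−N−2} in {|x| > 1}, u = 0 and |∇u| = c|x|^{−N} on {|x| = 1} for some constant c > 0, with u(x) → 0 as |x| → ∞ if N ≥ 3 (u bounded if N = 2); moreover necessarily c = 1. -/
open Filter

/-- The Laplacian of `u` at `x`, as the sum of the pure second partial derivatives. -/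
noncomputable def lap {N : ℕ} (u : EuclideanSpace ℝ (Fin N) → ℝ)
    (x : EuclideanSpace ℝ (Fin N)) : ℝ :=
  ∑ i : Fin N, fderiv ℝ (fun y => fderiv ℝ u y (EuclideanSpace.single i 1)) x
    (EuclideanSpace.single i 1)


lemma secondDeriv_nonpos_of_isLocalMax {g g' : ℝ → ℝ} {c : ℝ}
    (hd : ∀ᶠ t in nhds (0:ℝ), HasDerivAt g (g' t) t)
    (hd2 : HasDerivAt g' c 0)
    (hmax : IsLocalMax g 0) : c ≤ 0 := by
  by_contra hpos
  push_neg at hpos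
  have hg'0 : g' 0 = 0 := hmax.hasDerivAt_eq_zero hd.self_of_nhds
  -- slope of g' tends to c > 0, so g' > 0 on a right punctured neighborhood
  have hslope : Tendsto (slope g' 0) (nhdsWithin 0 {(0:ℝ)}ᶜ) (nhds c) :=
    hasDerivAt_iff_tendsto_slope.1 hd2
  have h1 : ∀ᶠ t in nhdsWithin (0:ℝ) (Set.Ioi 0), 0 < g' t := by
    have hs : ∀ᶠ t in nhdsWithin (0:ℝ) (Set.Ioi 0), 0 < slope g' 0 t := by
      have : nhdsWithin (0:ℝ) (Set.Ioi 0) ≤ nhdsWithin 0 {(0:ℝ)}ᶜ :=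
        nhdsWithin_mono _ (fun t ht => ne_of_gt ht)
      exact (hslope.mono_left this).eventually (eventually_gt_nhds hpos)
    filter_upwards [hs, self_mem_nhdsWithin] with t ht ht'
    have heq : slope g' 0 t = g' t / t := by simp [slope, hg'0, div_eq_inv_mul]
    rw [heq] at ht
    have ht'' : (0:ℝ) < t := ht'
    exact (div_pos_iff.1 ht).elim (fun h => h.1) (fun h => absurd h.2 (by linarith))
  -- get δ such that g has derivative g' on (-δ, δ) and g' > 0 on (0, δ)
  obtain ⟨δ₁, hδ₁, hder⟩ := Metric.eventually_nhds_iff_ball.1 hd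
  rw [eventually_nhdsWithin_iff, Metric.eventually_nhds_iff_ball] at h1
  obtain ⟨δ₂, hδ₂, hpos'⟩ := h1
  obtain ⟨δ₃, hδ₃, hmx⟩ := Metric.eventually_nhds_iff_ball.1 hmax
  set δ := min δ₁ (min δ₂ δ₃) with hδdef
  have hδ : 0 < δ := lt_min hδ₁ (lt_min hδ₂ hδ₃)
  set t := δ / 2 with ht_def
  have ht0 : 0 < t := by positivity
  have htδ : t < δ := by simp [ht_def]; linarith
  have htball : ∀ s ∈ Set.Icc (0:ℝ) t, HasDerivAt g (g' s) s := by
    intro s hs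
    apply hder
    simp only [Metric.mem_ball, Real.dist_eq]
    rw [sub_zero, abs_of_nonneg hs.1]
    calc s ≤ t := hs.2
    _ < δ := htδ
    _ ≤ δ₁ := min_le_left _ _
  -- MVT on [0, t]
  obtain ⟨ξ, hξ, hslope'⟩ := exists_hasDerivAt_eq_slope g g' ht0
    (fun s hs => (htball s hs).continuousAt.continuousWithinAt)
    (fun s hs => htball s ⟨le_of_lt hs.1, le_of_lt hs.2⟩)
  have hξpos : 0 < g' ξ := by
    apply hpos'
    · simp only [Metric.mem_ball, Real.dist_eq]
      rw [sub_zero, abs_of_nonneg hξ.1.le]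
      calc ξ < t := hξ.2
      _ < δ := htδ
      _ ≤ δ₂ := le_trans (min_le_right _ _) (min_le_left _ _)
    · exact hξ.1
  have hgt : g 0 < g t := by
    have h2 : g t - g 0 = g' ξ * (t - 0) := by
      rw [hslope', sub_zero, div_mul_cancel₀ _ ht0.ne']
    nlinarith [h2]
  have : g t ≤ g 0 := by
    apply hmx
    simp only [Metric.mem_ball, Real.dist_eq]
    rw [sub_zero, abs_of_nonneg ht0.le]
    calc t < δ := htδ
    _ ≤ δ₃ := le_trans (min_le_right _ _) (min_le_right _ _)
  linarith

lemma lap_nonpos_of_isLocalMax {N : ℕ} {u : EuclideanSpace ℝ (Fin N) → ℝ}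
    {O : Set (EuclideanSpace ℝ (Fin N))} (hO : IsOpen O) {x : EuclideanSpace ℝ (Fin N)}
    (hx : x ∈ O) (hu : ContDiffOn ℝ 2 u O) (hmax : IsLocalMax u x) : lap u x ≤ 0 := by
  have hxnhds : O ∈ nhds x := hO.mem_nhds hx
  have hu2 : ContDiffAt ℝ 2 u x := (hu x hx).contDiffAt hxnhds
  have hdiff : ∀ᶠ y in nhds x, DifferentiableAt ℝ u y := by
    filter_upwards [hO.eventually_mem hx] with y hy
    exact ((hu y hy).differentiableWithinAt (by norm_num)).differentiableAt (hO.mem_nhds hy)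
  apply Finset.sum_nonpos
  intro i _
  set e := EuclideanSpace.single i (1:ℝ) with he
  set F := fun y => fderiv ℝ u y e with hF_def
  have hF : DifferentiableAt ℝ F x := by
    have h1 : ContDiffAt ℝ 1 (fderiv ℝ u) x := hu2.fderiv_right (by norm_num)
    exact (h1.differentiableAt (by norm_num)).clm_apply (differentiableAt_const e)
  set L : ℝ → EuclideanSpace ℝ (Fin N) := fun t => x + t • e with hL_def
  have hL0 : L 0 = x := by simp [hL_def]
  have hLder : ∀ t : ℝ, HasDerivAt L e t := by
    intro t
    exact (((hasDerivAt_id t).smul_const e).const_add x).congr_deriv (one_smul ℝ e)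
  have hLt : Tendsto L (nhds 0) (nhds x) := by
    rw [← hL0]
    exact (hLder 0).continuousAt.tendsto
  have hd : ∀ᶠ t in nhds (0:ℝ), HasDerivAt (fun s => u (L s)) (F (L t)) t := by
    filter_upwards [hLt.eventually hdiff] with t ht
    exact ht.hasFDerivAt.comp_hasDerivAt t (hLder t)
  have hd2 : HasDerivAt (fun t => F (L t)) (fderiv ℝ F x e) 0 := by
    have hF' : HasFDerivAt F (fderiv ℝ F x) (L 0) := hL0 ▸ hF.hasFDerivAt
    exact hF'.comp_hasDerivAt 0 (hLder 0)
  have hmax' : IsLocalMax (fun s => u (L s)) 0 := by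
    have := hLt.eventually hmax
    simpa [IsLocalMax, IsMaxFilter, hL0] using this
  exact secondDeriv_nonpos_of_isLocalMax hd hd2 hmax'

lemma exists_max_on_boundary {N : ℕ} {K O : Set (EuclideanSpace ℝ (Fin N))}
    (hK : IsCompact K) (hO : IsOpen O) (hOK : O ⊆ K)
    {f : EuclideanSpace ℝ (Fin N) → ℝ} (hf : ContinuousOn f K)
    (hC2 : ContDiffOn ℝ 2 f O) (hlap : ∀ x ∈ O, 0 < lap f x)
    {x₀ : EuclideanSpace ℝ (Fin N)} (hx₀ : x₀ ∈ K) :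
    ∃ z ∈ K \ O, f x₀ ≤ f z := by
  obtain ⟨z₀, hz₀K, hmax⟩ := hK.exists_isMaxOn ⟨x₀, hx₀⟩ hf
  by_cases hz₀O : z₀ ∈ O
  · exfalso
    have hloc : IsLocalMax f z₀ := hmax.isLocalMax (mem_of_superset (hO.mem_nhds hz₀O) hOK)
    exact absurd (hlap z₀ hz₀O) (not_lt.2 (lap_nonpos_of_isLocalMax hO hz₀O hC2 hloc))
  · exact ⟨z₀, ⟨hz₀K, hz₀O⟩, hmax hx₀⟩

section radial
variable {N : ℕ}

local notation "E" => EuclideanSpace ℝ (Fin N)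

lemma normsq_hasFDerivAt (y : E) :
    HasFDerivAt (fun x : E => ‖x‖ ^ 2) (2 • (innerSL ℝ y)) y :=
  (hasStrictFDerivAt_norm_sq y).hasFDerivAt

/-- derivative of a radial function φ(‖x‖²) -/
lemma radial_hasFDerivAt {φ φ' : ℝ → ℝ} (y : E)
    (hφ : HasDerivAt φ (φ' (‖y‖ ^ 2)) (‖y‖ ^ 2)) :
    HasFDerivAt (fun x : E => φ (‖x‖ ^ 2)) ((2 * φ' (‖y‖ ^ 2)) • innerSL ℝ y) y := by
  have key := hφ.comp_hasFDerivAt y (normsq_hasFDerivAt y)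
  have heq : (φ' (‖y‖ ^ 2)) • ((2:ℕ) • innerSL ℝ y) = (2 * φ' (‖y‖ ^ 2)) • innerSL ℝ y := by
    ext v
    simp only [ContinuousLinearMap.smul_apply, smul_eq_mul]
    ring
  rw [heq] at key
  exact key

lemma sum_coord_sq (y : E) : ∑ i : Fin N, (y i) ^ 2 = ‖y‖ ^ 2 := by
  rw [EuclideanSpace.norm_eq, Real.sq_sqrt (by positivity)]
  simp [Real.norm_eq_abs, sq_abs]

/-- Laplacian of a radial function φ(‖x‖²) at y ≠ 0. -/
lemma lap_radial {φ φ' φ'' : ℝ → ℝ}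
    (hφ : ∀ s : ℝ, 0 < s → HasDerivAt φ (φ' s) s)
    (hφ' : ∀ s : ℝ, 0 < s → HasDerivAt φ' (φ'' s) s)
    {y : E} (hy : y ≠ 0) :
    lap (fun x : E => φ (‖x‖ ^ 2)) y
      = 4 * φ'' (‖y‖ ^ 2) * ‖y‖ ^ 2 + 2 * N * φ' (‖y‖ ^ 2) := by
  have hy0 : (0:ℝ) < ‖y‖ := norm_pos_iff.mpr hy
  have hy' : (0:ℝ) < ‖y‖ ^ 2 := by positivity
  unfold lap
  have key : ∀ i : Fin N,
      fderiv ℝ (fun z : E => fderiv ℝ (fun x : E => φ (‖x‖ ^ 2)) z (EuclideanSpace.single i 1)) y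
        (EuclideanSpace.single i 1)
      = 4 * φ'' (‖y‖ ^ 2) * (y i) ^ 2 + 2 * φ' (‖y‖ ^ 2) := by
    intro i
    set e := EuclideanSpace.single i (1:ℝ) with he
    -- inner function eventually equals H
    have hG : (fun z : E => fderiv ℝ (fun x : E => φ (‖x‖ ^ 2)) z e)
        =ᶠ[nhds y] (fun z : E => 2 * φ' (‖z‖ ^ 2) * (z i)) := by
      have hopen : IsOpen {z : E | z ≠ 0} := isOpen_ne
      filter_upwards [hopen.eventually_mem hy] with z hz
      have hz0 : (0:ℝ) < ‖z‖ := norm_pos_iff.mpr hz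
      have hz' : (0:ℝ) < ‖z‖ ^ 2 := by positivity
      have := (radial_hasFDerivAt z (hφ _ hz')).fderiv
      rw [this]
      simp only [ContinuousLinearMap.coe_smul', Pi.smul_apply, innerSL_apply_apply, smul_eq_mul]
      rw [he, EuclideanSpace.inner_single_right]
      simp [mul_assoc]
    rw [hG.fderiv_eq]
    -- derivative of H z = 2 * φ'(‖z‖²) * z i
    have h1 : HasFDerivAt (fun z : E => φ' (‖z‖ ^ 2))
        ((2 * φ'' (‖y‖ ^ 2)) • innerSL ℝ y) y := radial_hasFDerivAt y (hφ' _ hy')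
    have h2 : HasFDerivAt (fun z : E => (z i : ℝ)) (EuclideanSpace.proj (𝕜 := ℝ) i) y :=
      (EuclideanSpace.proj (𝕜 := ℝ) i).hasFDerivAt
    have h3 := (h1.mul h2).const_mul (2:ℝ)
    have h4 : HasFDerivAt (fun z : E => 2 * (φ' (‖z‖ ^ 2) * (z i)))
        ((2:ℝ) • (φ' (‖y‖ ^ 2) • (EuclideanSpace.proj (𝕜:=ℝ) i)
          + (y i) • ((2 * φ'' (‖y‖ ^ 2)) • innerSL ℝ y))) y := h3
    have h5 : HasFDerivAt (fun z : E => 2 * φ' (‖z‖ ^ 2) * (z i))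
        ((2:ℝ) • (φ' (‖y‖ ^ 2) • (EuclideanSpace.proj (𝕜:=ℝ) i)
          + (y i) • ((2 * φ'' (‖y‖ ^ 2)) • innerSL ℝ y))) y := by
      convert h4 using 2; ring
    rw [h5.fderiv]
    simp only [ContinuousLinearMap.coe_smul', Pi.smul_apply, ContinuousLinearMap.add_apply,
      ContinuousLinearMap.coe_smul', Pi.smul_apply, innerSL_apply_apply, smul_eq_mul]
    rw [he]
    have hproj : (EuclideanSpace.proj (𝕜:=ℝ) i) (EuclideanSpace.single i (1:ℝ)) = 1 := by
      simp
    have hinner : (inner ℝ y (EuclideanSpace.single i (1:ℝ)) : ℝ) = y i := by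
      rw [EuclideanSpace.inner_single_right]; simp
    rw [hproj, hinner]
    ring
  rw [Finset.sum_congr rfl (fun i _ => key i)]
  rw [Finset.sum_add_distrib]
  simp only [Finset.sum_const, Finset.card_univ, Fintype.card_fin, nsmul_eq_mul]
  rw [← Finset.mul_sum, sum_coord_sq y]
  ring

end radial

section specific
variable {N : ℕ}
local notation "E" => EuclideanSpace ℝ (Fin N)

lemma normsq_rpow (x : E) (α : ℝ) : ((‖x‖ ^ 2 : ℝ)) ^ (α / 2) = ‖x‖ ^ α := by
  rw [← Real.rpow_natCast ‖x‖ 2, ← Real.rpow_mul (norm_nonneg x)]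
  congr 1
  push_cast
  ring

/-- the reference solution -/
noncomputable def Uref (N : ℕ) (x : EuclideanSpace ℝ (Fin N)) : ℝ :=
  (‖x‖ ^ (-(N : ℝ)) - ‖x‖ ^ ((2 : ℝ) - N)) / 2

lemma Uref_eq (x : E) :
    Uref N x = ((‖x‖ ^ 2 : ℝ) ^ ((-(N:ℝ)/2)) - (‖x‖ ^ 2 : ℝ) ^ (((2:ℝ)-N)/2)) / 2 := by
  rw [Uref, normsq_rpow, normsq_rpow]

lemma lap_U {y : E} (hy : y ≠ 0) (hN : 1 ≤ N) :
    lap (Uref N) y = N * ‖y‖ ^ (-(N : ℝ) - 2) := by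
  set a : ℝ := -(N:ℝ)/2 with ha
  set b : ℝ := ((2:ℝ)-N)/2 with hb
  set φ : ℝ → ℝ := fun s => (s ^ a - s ^ b) / 2 with hφ_def
  set φ' : ℝ → ℝ := fun s => (a * s ^ (a-1) - b * s ^ (b-1)) / 2 with hφ'_def
  set φ'' : ℝ → ℝ := fun s => (a * (a-1) * s ^ (a-2) - b * (b-1) * s ^ (b-2)) / 2 with hφ''_def
  have hφ : ∀ s : ℝ, 0 < s → HasDerivAt φ (φ' s) s := fun s hs =>
    ((Real.hasDerivAt_rpow_const (Or.inl hs.ne')).sub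
      (Real.hasDerivAt_rpow_const (Or.inl hs.ne'))).div_const 2
  have hφ' : ∀ s : ℝ, 0 < s → HasDerivAt φ' (φ'' s) s := by
    intro s hs
    have h1 : HasDerivAt (fun s : ℝ => a * s ^ (a-1)) (a * ((a-1) * s ^ (a-1-1))) s :=
      (Real.hasDerivAt_rpow_const (Or.inl hs.ne')).const_mul a
    have h2 : HasDerivAt (fun s : ℝ => b * s ^ (b-1)) (b * ((b-1) * s ^ (b-1-1))) s :=
      (Real.hasDerivAt_rpow_const (Or.inl hs.ne')).const_mul b
    have h3 := (h1.sub h2).div_const 2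
    rw [show a-1-1 = a-2 by ring, show b-1-1 = b-2 by ring] at h3
    have e1 : (a * ((a-1) * s ^ (a-2)) - b * ((b-1) * s ^ (b-2))) / 2 = φ'' s := by
      show _ = (a * (a-1) * s ^ (a-2) - b * (b-1) * s ^ (b-2)) / 2; ring
    exact h3.congr_deriv e1
  have hUeq : Uref N = fun x : E => φ (‖x‖ ^ 2) := by
    funext x
    rw [Uref_eq]
  rw [hUeq, lap_radial hφ hφ' hy]
  set s : ℝ := ‖y‖ ^ 2 with hs_def
  have hs : 0 < s := by
    have : (0:ℝ) < ‖y‖ := norm_pos_iff.mpr hy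
    positivity
  have hA : s ^ (a-1) = s ^ (a-2) * s := by
    rw [← Real.rpow_add_one hs.ne']; congr 1; ring
  have hB : s ^ (b-1) = s ^ (b-2) * s := by
    rw [← Real.rpow_add_one hs.ne']; congr 1; ring
  have hRHS : ‖y‖ ^ (-(N:ℝ) - 2) = s ^ (a - 1) := by
    rw [hs_def, show a - 1 = (-(N:ℝ)-2)/2 by rw [ha]; ring, normsq_rpow]
  rw [hRHS]
  simp only [hφ'_def, hφ''_def]
  rw [hA, hB, ha, hb]
  ring
end specific

section specific2
variable {N : ℕ}
local notation "E" => EuclideanSpace ℝ (Fin N)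

lemma lap_normsq {y : E} (hy : y ≠ 0) :
    lap (fun x : E => ‖x‖ ^ 2) y = 2 * N := by
  have h : (fun x : E => ‖x‖ ^ 2) = (fun x : E => (fun s : ℝ => s) (‖x‖ ^ 2)) := rfl
  rw [h]
  rw [lap_radial (φ := fun s : ℝ => s) (φ' := fun _ => (1:ℝ)) (φ'' := fun _ => (0:ℝ))
    (fun s _ => hasDerivAt_id s) (fun s _ => hasDerivAt_const s 1) hy]
  ring

lemma lap_log {y : E} (hy : y ≠ 0) (hN : N = 2) :
    lap (fun x : E => Real.log ‖x‖) y = 0 := by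
  have h : (fun x : E => Real.log ‖x‖)
      = (fun x : E => (fun s : ℝ => Real.log s / 2) (‖x‖ ^ 2)) := by
    funext x
    simp only []
    rw [Real.log_pow]
    push_cast
    ring
  have hφ : ∀ s : ℝ, 0 < s → HasDerivAt (fun s : ℝ => Real.log s / 2) (s⁻¹ / 2) s :=
    fun s hs => (Real.hasDerivAt_log hs.ne').div_const 2
  have hφ' : ∀ s : ℝ, 0 < s → HasDerivAt (fun s : ℝ => s⁻¹ / 2) (-(s ^ 2)⁻¹ / 2) s :=
    fun s hs => (hasDerivAt_inv hs.ne').div_const 2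
  rw [h, lap_radial hφ hφ' hy]
  subst hN
  have hs : (0:ℝ) < ‖y‖ ^ 2 := by
    have : (0:ℝ) < ‖y‖ := norm_pos_iff.mpr hy
    positivity
  have h2 : ((‖y‖ ^ 2 : ℝ) ^ 2)⁻¹ * ‖y‖ ^ 2 = (‖y‖ ^ 2 : ℝ)⁻¹ := by
    rw [sq (‖y‖^2 : ℝ), mul_inv]
    field_simp
  push_cast
  nlinarith [h2]

end specific2

section linearity
variable {N : ℕ}
local notation "E" => EuclideanSpace ℝ (Fin N)

lemma diffAt_fderiv_apply {u : E → ℝ} {O : Set E} (hO : IsOpen O) {x : E} (hx : x ∈ O)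
    (hu : ContDiffOn ℝ 2 u O) (e : E) :
    DifferentiableAt ℝ (fun y => fderiv ℝ u y e) x := by
  have hu2 : ContDiffAt ℝ 2 u x := (hu x hx).contDiffAt (hO.mem_nhds hx)
  have h1 : ContDiffAt ℝ 1 (fderiv ℝ u) x := hu2.fderiv_right (by norm_num)
  exact (h1.differentiableAt (by norm_num)).clm_apply (differentiableAt_const e)

lemma eventually_diffAt {u : E → ℝ} {O : Set E} (hO : IsOpen O) {x : E} (hx : x ∈ O)
    (hu : ContDiffOn ℝ 2 u O) : ∀ᶠ y in nhds x, DifferentiableAt ℝ u y := by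
  filter_upwards [hO.eventually_mem hx] with y hy
  exact ((hu y hy).differentiableWithinAt (by norm_num)).differentiableAt (hO.mem_nhds hy)

lemma lap_add {u v : E → ℝ} {O : Set E} (hO : IsOpen O) {x : E} (hx : x ∈ O)
    (hu : ContDiffOn ℝ 2 u O) (hv : ContDiffOn ℝ 2 v O) :
    lap (fun y => u y + v y) x = lap u x + lap v x := by
  unfold lap
  rw [← Finset.sum_add_distrib]
  apply Finset.sum_congr rfl
  intro i _
  set e := EuclideanSpace.single i (1:ℝ)
  have h1 : (fun y => fderiv ℝ (fun z => u z + v z) y e)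
      =ᶠ[nhds x] (fun y => fderiv ℝ u y e + fderiv ℝ v y e) := by
    filter_upwards [eventually_diffAt hO hx hu, eventually_diffAt hO hx hv] with y h h'
    rw [fderiv_fun_add h h']
    rfl
  rw [h1.fderiv_eq, fderiv_fun_add (diffAt_fderiv_apply hO hx hu e) (diffAt_fderiv_apply hO hx hv e)]
  rfl

lemma lap_const_mul {u : E → ℝ} {O : Set E} (hO : IsOpen O) {x : E} (hx : x ∈ O)
    (hu : ContDiffOn ℝ 2 u O) (c : ℝ) :
    lap (fun y => c * u y) x = c * lap u x := by
  unfold lap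
  rw [Finset.mul_sum]
  apply Finset.sum_congr rfl
  intro i _
  set e := EuclideanSpace.single i (1:ℝ)
  have h1 : (fun y => fderiv ℝ (fun z => c * u z) y e)
      =ᶠ[nhds x] (fun y => c * fderiv ℝ u y e) := by
    filter_upwards [eventually_diffAt hO hx hu] with y h
    rw [fderiv_const_mul h c]
    rfl
  rw [h1.fderiv_eq, fderiv_const_mul (diffAt_fderiv_apply hO hx hu e) c]
  rfl

end linearity

section boundary
variable {N : ℕ}
local notation "E" => EuclideanSpace ℝ (Fin N)

lemma fderiv_eq_zero_of_boundary {g : E → ℝ} {x : E} (hx : ‖x‖ = 1)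
    (hg : DifferentiableAt ℝ g x) (h0 : ∀ y : E, 1 ≤ ‖y‖ → g y = 0) :
    fderiv ℝ g x = 0 := by
  set f' := fderiv ℝ g x with hf'
  have key : ∀ d : E, 0 ≤ (inner ℝ x d : ℝ) → f' d = 0 := by
    intro d hd
    have hLder : ∀ t : ℝ, HasDerivAt (fun t : ℝ => x + t • d) d t := by
      intro t
      simpa using ((hasDerivAt_id t).smul_const d).const_add x
    have hline : HasDerivAt (fun t : ℝ => g (x + t • d)) (f' d) 0 := by
      have hg' : HasFDerivAt g f' ((fun t : ℝ => x + t • d) 0) := by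
        simpa using hg.hasFDerivAt
      exact hg'.comp_hasDerivAt 0 (hLder 0)
    have hnorm : ∀ t : ℝ, 0 ≤ t → (1:ℝ) ≤ ‖x + t • d‖ := by
      intro t ht
      have hsq : ‖x + t • d‖ ^ 2 = ‖x‖ ^ 2 + 2 * (inner ℝ x (t • d) : ℝ) + ‖t • d‖ ^ 2 :=
        norm_add_sq_real x (t • d)
      have hi : (inner ℝ x (t • d) : ℝ) = t * (inner ℝ x d : ℝ) := real_inner_smul_right x d t
      have h1 : (1:ℝ) ≤ ‖x + t • d‖ ^ 2 := by
        rw [hsq, hi, hx]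
        nlinarith [sq_nonneg ‖t • d‖, mul_nonneg ht hd]
      nlinarith [norm_nonneg (x + t • d)]
    have hzero : Set.EqOn (fun t : ℝ => g (x + t • d)) (fun _ => (0:ℝ)) (Set.Ici 0) := by
      intro t ht
      exact h0 _ (hnorm t ht)
    have hW1 : HasDerivWithinAt (fun t : ℝ => g (x + t • d)) (f' d) (Set.Ici 0) 0 :=
      hline.hasDerivWithinAt
    have hW2 : HasDerivWithinAt (fun t : ℝ => g (x + t • d)) 0 (Set.Ici 0) 0 := by
      apply (hasDerivWithinAt_const (0:ℝ) (Set.Ici (0:ℝ)) (0:ℝ)).congr hzero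
      simpa using h0 x (le_of_eq hx.symm)
    have huniq := (uniqueDiffOn_Ici (0:ℝ) 0 Set.self_mem_Ici).eq
      hW1.hasFDerivWithinAt hW2.hasFDerivWithinAt
    have := congrArg (fun (L : ℝ →L[ℝ] ℝ) => L 1) huniq
    simpa using this
  ext d
  have h1 : f' (d + (1 + |(inner ℝ x d : ℝ)|) • x) = 0 := by
    apply key
    rw [inner_add_right, real_inner_smul_right, real_inner_self_eq_norm_sq, hx]
    cases abs_cases (inner ℝ x d : ℝ) with
    | inl h => nlinarith [h.1]
    | inr h => nlinarith [h.1]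
  have h2 : f' x = 0 := key x (by rw [real_inner_self_eq_norm_sq, hx]; norm_num)
  have h3 : f' (d + (1 + |(inner ℝ x d : ℝ)|) • x) = f' d + (1 + |(inner ℝ x d : ℝ)|) * f' x := by
    rw [map_add, map_smul]; rfl
  simp only [ContinuousLinearMap.zero_apply]
  rw [h3, h2] at h1
  linarith
end boundary

section annulus
variable {N : ℕ}
local notation "E" => EuclideanSpace ℝ (Fin N)

lemma annulus_bound (hNpos : 0 < N) {v : E → ℝ} {Ω : Set E} (hΩ : IsOpen Ω)
    (hΩ1 : {z : E | 1 ≤ ‖z‖} ⊆ Ω) (hvC : ContDiffOn ℝ 2 v Ω)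
    (hlap : ∀ y : E, 1 < ‖y‖ → lap v y = 0)
    {R m : ℝ} (hR : 1 < R) (hm : 0 ≤ m)
    (hb1 : ∀ y : E, ‖y‖ = 1 → v y ≤ 0) (hbR : ∀ y : E, ‖y‖ = R → v y ≤ m)
    {x₀ : E} (hx₀ : 1 ≤ ‖x₀‖) (hx₀R : ‖x₀‖ ≤ R) : v x₀ ≤ m := by
  set K : Set E := {z | 1 ≤ ‖z‖ ∧ ‖z‖ ≤ R} with hK_def
  set O : Set E := {z | 1 < ‖z‖ ∧ ‖z‖ < R} with hO_def
  have hKΩ : K ⊆ Ω := fun z hz => hΩ1 hz.1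
  have hOK : O ⊆ K := fun z hz => ⟨hz.1.le, hz.2.le⟩
  have hK : IsCompact K := by
    have hcl : IsClosed K := by
      have : K = (fun z : E => ‖z‖) ⁻¹' Set.Icc 1 R := by
        ext z; simp [hK_def, Set.mem_Icc]
      rw [this]
      exact isClosed_Icc.preimage continuous_norm
    have hbd : Bornology.IsBounded K :=
      (Metric.isBounded_closedBall (x := (0:E)) (r := R)).subset
        (fun z hz => by simpa [Metric.mem_closedBall] using hz.2)
    exact Metric.isCompact_of_isClosed_isBounded hcl hbd
  have hO : IsOpen O := by
    have : O = (fun z : E => ‖z‖) ⁻¹' Set.Ioo 1 R := by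
      ext z; simp [hO_def, Set.mem_Ioo]
    rw [this]
    exact isOpen_Ioo.preimage continuous_norm
  -- the perturbation argument
  have main : ∀ δ : ℝ, 0 < δ → v x₀ ≤ m + δ * R ^ 2 := by
    intro δ hδ
    set w : E → ℝ := fun y => v y + δ * ‖y‖ ^ 2 with hw_def
    have hnsC : ContDiffOn ℝ 2 (fun y : E => δ * ‖y‖ ^ 2) O :=
      (contDiff_const.mul (contDiff_norm_sq ℝ)).contDiffOn
    have hvO : ContDiffOn ℝ 2 v O := hvC.mono (hOK.trans hKΩ)
    have hwC2 : ContDiffOn ℝ 2 w O := hvO.add hnsC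
    have hwcont : ContinuousOn w K := by
      apply ContinuousOn.add (hvC.continuousOn.mono hKΩ)
      exact (continuous_const.mul (continuous_norm.pow 2)).continuousOn
    have hwlap : ∀ y ∈ O, 0 < lap w y := by
      intro y hy
      have hy0 : y ≠ 0 := by
        intro h
        rw [h] at hy
        simp [hO_def] at hy
        linarith [hy.1]
      have h1 : lap w y = lap v y + lap (fun z : E => δ * ‖z‖ ^ 2) y :=
        lap_add hO hy hvO ((contDiff_const.mul (contDiff_norm_sq ℝ)).contDiffOn)
      have h2 : lap (fun z : E => δ * ‖z‖ ^ 2) y = δ * (2 * N) := by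
        rw [lap_const_mul hO hy ((contDiff_norm_sq ℝ).contDiffOn) δ, lap_normsq hy0]
      rw [h1, h2, hlap y hy.1]
      have : (0:ℝ) < (N:ℝ) := by exact_mod_cast hNpos
      nlinarith
    have hx₀K : x₀ ∈ K := ⟨hx₀, hx₀R⟩
    obtain ⟨z, hzKO, hwz⟩ := exists_max_on_boundary hK hO hOK hwcont hwC2 hwlap hx₀K
    have hz : ‖z‖ = 1 ∨ ‖z‖ = R := by
      rcases hzKO with ⟨⟨h1, h2⟩, h3⟩
      simp only [hO_def, Set.mem_setOf_eq, not_and, not_lt] at h3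
      rcases lt_or_eq_of_le h1 with h | h
      · exact Or.inr (le_antisymm h2 (h3 h))
      · exact Or.inl h.symm
    have hwzb : w z ≤ m + δ * R ^ 2 := by
      have hR2' : (1:ℝ) ≤ R ^ 2 := by nlinarith
      rcases hz with h | h
      · have := hb1 z h
        simp only [hw_def, h]
        nlinarith [mul_le_mul_of_nonneg_left hR2' hδ.le]
      · have := hbR z h
        simp only [hw_def, h]
        nlinarith
    have : v x₀ ≤ w x₀ := by
      simp only [hw_def]
      nlinarith [sq_nonneg ‖x₀‖]
    linarith
  by_contra hlt
  push_neg at hlt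
  have hR2 : (0:ℝ) < R ^ 2 := by positivity
  have hpos : 0 < (v x₀ - m) / (2 * R ^ 2) := div_pos (by linarith) (by positivity)
  have h2 := main _ hpos
  have h3 : (v x₀ - m) / (2 * R ^ 2) * R ^ 2 = (v x₀ - m) / 2 := by
    field_simp
  rw [h3] at h2
  linarith

end annulus

section urefprops
variable {N : ℕ}
local notation "E" => EuclideanSpace ℝ (Fin N)
open Filter

lemma contDiffAt_Uref {y : E} (hy : y ≠ 0) : ContDiffAt ℝ 2 (Uref N) y := by
  have hn : ‖y‖ ≠ 0 := norm_ne_zero_iff.2 hy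
  have h1 : ContDiffAt ℝ 2 (fun x : E => ‖x‖ ^ (-(N:ℝ))) y :=
    (Real.contDiffAt_rpow_const_of_ne hn).comp y (contDiffAt_norm ℝ hy)
  have h2 : ContDiffAt ℝ 2 (fun x : E => ‖x‖ ^ ((2:ℝ)-N)) y :=
    (Real.contDiffAt_rpow_const_of_ne hn).comp y (contDiffAt_norm ℝ hy)
  exact (h1.sub h2).div_const 2

lemma contDiffAt_lognorm {y : E} (hy : y ≠ 0) : ContDiffAt ℝ 2 (fun x : E => Real.log ‖x‖) y :=
  (Real.contDiffAt_log.2 (norm_ne_zero_iff.2 hy)).comp y (contDiffAt_norm ℝ hy)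

lemma Uref_zero {y : E} (hy : ‖y‖ = 1) : Uref N y = 0 := by
  simp [Uref, hy, Real.one_rpow]

lemma Uref_tendsto (hN : 3 ≤ N) :
    Tendsto (Uref N) (Bornology.cobounded E) (nhds 0) := by
  have h1 : Tendsto (fun r : ℝ => (r ^ (-(N:ℝ)) - r ^ ((2:ℝ)-(N:ℝ))) / 2) atTop (nhds 0) := by
    have hN0 : (0:ℝ) < (N:ℝ) := by
      have : (0:ℕ) < N := by omega
      exact_mod_cast this
    have hN2 : (0:ℝ) < (N:ℝ) - 2 := by
      have : (2:ℕ) < N := by omega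
      have : (2:ℝ) < (N:ℝ) := by exact_mod_cast this
      linarith
    have ha := tendsto_rpow_neg_atTop hN0
    have hb := tendsto_rpow_neg_atTop hN2
    have hb' : Tendsto (fun r : ℝ => r ^ ((2:ℝ)-(N:ℝ))) atTop (nhds 0) := by
      have : ((2:ℝ)-(N:ℝ)) = -((N:ℝ)-2) := by ring
      rw [this]
      exact hb
    have := (ha.sub hb').div_const 2
    simpa using this
  have h2 := h1.comp (tendsto_norm_cobounded_atTop :
    Tendsto (fun x : E => ‖x‖) (Bornology.cobounded E) atTop)
  have : Uref N = (fun r : ℝ => (r ^ (-(N:ℝ)) - r ^ ((2:ℝ)-(N:ℝ))) / 2) ∘ (fun x : E => ‖x‖) := by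
    funext z
    simp [Uref, Function.comp]
  rw [this]
  exact h2

lemma Uref_bound2 (hN : N = 2) {y : E} (hy : 1 ≤ ‖y‖) : |Uref N y| ≤ 1 := by
  subst hN
  have h0 : (0:ℝ) ≤ ‖y‖ ^ (-(2:ℝ)) := Real.rpow_nonneg (norm_nonneg y) _
  have h1 : ‖y‖ ^ (-(2:ℝ)) ≤ 1 := by
    have := Real.rpow_le_rpow_of_exponent_le hy (by norm_num : (-2:ℝ) ≤ 0)
    simpa [Real.rpow_zero] using this
  have h2 : ‖y‖ ^ ((2:ℝ) - (2:ℕ)) = 1 := by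
    norm_num
  rw [Uref, h2]
  rw [abs_le]
  constructor <;> push_cast <;> nlinarith

/-- derivative of Uref at boundary points -/
lemma Uref_hasFDerivAt_boundary {x : E} (hx : ‖x‖ = 1) :
    HasFDerivAt (Uref N) ((-1:ℝ) • innerSL ℝ x) x := by
  set a : ℝ := -(N:ℝ)/2 with ha
  set b : ℝ := ((2:ℝ)-N)/2 with hb
  set φ : ℝ → ℝ := fun s => (s ^ a - s ^ b) / 2 with hφ_def
  set φ' : ℝ → ℝ := fun s => (a * s ^ (a-1) - b * s ^ (b-1)) / 2 with hφ'_def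
  have hUeq : Uref N = fun z : E => φ (‖z‖ ^ 2) := by
    funext z
    rw [Uref_eq]
  have hx2 : ‖x‖ ^ 2 = (1:ℝ) := by rw [hx]; norm_num
  have hφd : HasDerivAt φ (φ' (‖x‖ ^ 2)) (‖x‖ ^ 2) := by
    have := ((Real.hasDerivAt_rpow_const (p := a) (x := (‖x‖^2:ℝ))
      (Or.inl (by rw [hx2]; norm_num))).sub
      (Real.hasDerivAt_rpow_const (p := b) (x := (‖x‖^2:ℝ))
      (Or.inl (by rw [hx2]; norm_num)))).div_const 2
    exact this
  have := radial_hasFDerivAt (φ := φ) (φ' := φ') x hφd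
  rw [hUeq]
  have heq : (2 * φ' (‖x‖ ^ 2)) = (-1 : ℝ) := by
    rw [hφ'_def, hx2]
    simp only [Real.one_rpow]
    rw [ha, hb]
    ring
  rwa [heq] at this

end urefprops

theorem stmt_18 {N : ℕ} (hN : 2 ≤ N)
    (u : EuclideanSpace ℝ (Fin N) → ℝ)
    -- u is C² on a neighborhood of the closed exterior region {|x| ≥ 1}
    (V : Set (EuclideanSpace ℝ (Fin N))) (hVo : IsOpen V)
    (hV : {x : EuclideanSpace ℝ (Fin N) | 1 ≤ ‖x‖} ⊆ V) (hu : ContDiffOn ℝ 2 u V)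
    (c : ℝ) (hc : 0 < c)
    (hEq : ∀ x : EuclideanSpace ℝ (Fin N), 1 < ‖x‖ → lap u x = N * ‖x‖ ^ (-(N : ℝ) - 2))
    (hbd0 : ∀ x : EuclideanSpace ℝ (Fin N), ‖x‖ = 1 → u x = 0)
    (hbd1 : ∀ x : EuclideanSpace ℝ (Fin N), ‖x‖ = 1 →
      ‖gradient u x‖ = c * ‖x‖ ^ (-(N : ℝ)))
    (hdecay3 : 3 ≤ N →
      Tendsto u (Bornology.cobounded (EuclideanSpace ℝ (Fin N))) (nhds 0))
    (hdecay2 : N = 2 →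
      ∃ C : ℝ, ∀ x : EuclideanSpace ℝ (Fin N), 1 ≤ ‖x‖ → |u x| ≤ C) :
    c = 1 ∧
    ∀ x : EuclideanSpace ℝ (Fin N), 1 ≤ ‖x‖ →
      u x = (‖x‖ ^ (-(N : ℝ)) - ‖x‖ ^ ((2 : ℝ) - N)) / 2 := by
  classical
  have hN0 : 0 < N := by omega
  set Ω : Set (EuclideanSpace ℝ (Fin N)) := V ∩ {z | z ≠ 0} with hΩdef
  have hΩo : IsOpen Ω := hVo.inter isOpen_ne
  have hΩ1 : {z : EuclideanSpace ℝ (Fin N) | 1 ≤ ‖z‖} ⊆ Ω := by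
    intro z hz
    refine ⟨hV hz, ?_⟩
    intro h0
    rw [Set.mem_setOf_eq, h0] at hz
    simp at hz
    linarith
  have hUC : ContDiffOn ℝ 2 (Uref N) Ω := fun y hy => (contDiffAt_Uref hy.2).contDiffWithinAt
  have huΩ : ContDiffOn ℝ 2 u Ω := hu.mono Set.inter_subset_left
  set v : EuclideanSpace ℝ (Fin N) → ℝ := fun y => u y - Uref N y with hvdef
  have hvC : ContDiffOn ℝ 2 v Ω := huΩ.sub hUC
  have hvlap : ∀ y : EuclideanSpace ℝ (Fin N), 1 < ‖y‖ → lap v y = 0 := by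
    intro y hy
    have hyΩ : y ∈ Ω := hΩ1 (le_of_lt hy)
    have hy0 : y ≠ 0 := hyΩ.2
    have hrw : v = fun z => u z + (-1 : ℝ) * Uref N z := by
      funext z; simp [hvdef]; ring
    rw [hrw, lap_add hΩo hyΩ huΩ ((contDiffOn_const).mul hUC),
        lap_const_mul hΩo hyΩ hUC (-1), lap_U hy0 (by omega), hEq y hy]
    ring
  have hv1 : ∀ y : EuclideanSpace ℝ (Fin N), ‖y‖ = 1 → v y = 0 := fun y hy => by
    simp [hvdef, hbd0 y hy, Uref_zero hy]
  -- one sided bound, for w = v and w = -v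
  have hsuff : ∀ w : EuclideanSpace ℝ (Fin N) → ℝ, ContDiffOn ℝ 2 w Ω →
      (∀ y : EuclideanSpace ℝ (Fin N), 1 < ‖y‖ → lap w y = 0) →
      (∀ y : EuclideanSpace ℝ (Fin N), ‖y‖ = 1 → w y = 0) →
      (Tendsto w (Bornology.cobounded (EuclideanSpace ℝ (Fin N))) (nhds 0) ∨
        (N = 2 ∧ ∃ M : ℝ, 0 ≤ M ∧ ∀ y : EuclideanSpace ℝ (Fin N), 1 ≤ ‖y‖ → |w y| ≤ M)) →
      ∀ x₀ : EuclideanSpace ℝ (Fin N), 1 ≤ ‖x₀‖ → w x₀ ≤ 0 := by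
    intro w hwC hwlap hw1 hdec x₀ hx₀
    rcases hdec with hT | ⟨hN2, M, hM0, hMb⟩
    · -- decay case
      by_contra hpos
      push_neg at hpos
      set ε : ℝ := w x₀ / 2 with hεdef
      have hε : 0 < ε := by simp [hεdef]; linarith
      have hev : ∀ᶠ y in Bornology.cobounded (EuclideanSpace ℝ (Fin N)), |w y| < ε := by
        have := Metric.tendsto_nhds.1 hT ε hε
        filter_upwards [this] with y hy
        simpa [Real.dist_eq] using hy
      obtain ⟨r, -, hr⟩ := (Filter.hasBasis_cobounded_norm).eventually_iff.1 hev
      set R : ℝ := max r (max ‖x₀‖ 2) with hRdef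
      have hR1 : 1 < R := by
        have : (2:ℝ) ≤ R := le_trans (le_max_right _ _) (le_max_right _ _)
        linarith
      have hx₀R : ‖x₀‖ ≤ R := le_trans (le_max_left _ _) (le_max_right _ _)
      have hwbd := annulus_bound hN0 hΩo hΩ1 hwC hwlap hR1 hε.le
        (fun y hy => le_of_eq (hw1 y hy))
        (fun y hy => by
          have hmem : y ∈ {x : EuclideanSpace ℝ (Fin N) | r ≤ ‖x‖} := by
            rw [Set.mem_setOf_eq, hy]; exact le_max_left _ _
          exact le_trans (le_abs_self _) (hr hmem).le)
        hx₀ hx₀R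
      simp [hεdef] at hwbd
      linarith
    · -- N = 2 barrier case
      have hkey : ∀ R : ℝ, max ‖x₀‖ 2 ≤ R →
          w x₀ ≤ M / Real.log R * Real.log ‖x₀‖ := by
        intro R hRge
        have hR1 : (1:ℝ) < R :=
          lt_of_lt_of_le (by norm_num) (le_trans (le_max_right _ _) hRge)
        have hlogR : 0 < Real.log R := Real.log_pos hR1
        set η : ℝ := M / Real.log R with hηdef
        have hη : 0 ≤ η := div_nonneg hM0 hlogR.le
        set w' : EuclideanSpace ℝ (Fin N) → ℝ :=
          fun y => w y + (-η) * Real.log ‖y‖ with hw'def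
        have hlogC : ContDiffOn ℝ 2 (fun y : EuclideanSpace ℝ (Fin N) => Real.log ‖y‖) Ω :=
          fun y hy => (contDiffAt_lognorm hy.2).contDiffWithinAt
        have hw'C : ContDiffOn ℝ 2 w' Ω := hwC.add ((contDiffOn_const).mul hlogC)
        have hw'lap : ∀ y : EuclideanSpace ℝ (Fin N), 1 < ‖y‖ → lap w' y = 0 := by
          intro y hy
          have hyΩ : y ∈ Ω := hΩ1 (le_of_lt hy)
          rw [hw'def, lap_add hΩo hyΩ hwC ((contDiffOn_const).mul hlogC),
              lap_const_mul hΩo hyΩ hlogC (-η), lap_log hyΩ.2 hN2, hwlap y hy]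
          ring
        have hb1' : ∀ y : EuclideanSpace ℝ (Fin N), ‖y‖ = 1 → w' y ≤ 0 := by
          intro y hy
          simp [hw'def, hy, Real.log_one, hw1 y hy]
        have hbR' : ∀ y : EuclideanSpace ℝ (Fin N), ‖y‖ = R → w' y ≤ 0 := by
          intro y hy
          have h1 : |w y| ≤ M := hMb y (by rw [hy]; linarith)
          have h2 : (-η) * Real.log ‖y‖ = -M := by
            rw [hy, hηdef]
            field_simp
          rw [hw'def]
          simp only []
          rw [h2]
          cases abs_le.1 h1 with
          | intro hl hr => linarith
        have hfin := annulus_bound hN0 hΩo hΩ1 hw'C hw'lap hR1 (le_refl (0:ℝ))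
          hb1' hbR' hx₀ (le_trans (le_max_left _ _) hRge)
        rw [hw'def] at hfin
        simp only [] at hfin
        rw [hηdef] at hfin ⊢
        linarith
      by_contra hpos
      push_neg at hpos
      set L : ℝ := Real.log ‖x₀‖ with hLdef
      have hL0 : 0 ≤ L := Real.log_nonneg hx₀
      set T : ℝ := 2 * M * L / w x₀ + 1 with hTdef
      have hT1 : 1 ≤ T := by
        rw [hTdef]
        have : 0 ≤ 2 * M * L / w x₀ := by positivity
        linarith
      set R : ℝ := max (Real.exp T) (max ‖x₀‖ 2) with hRdef
      have hRge : max ‖x₀‖ 2 ≤ R := le_max_right _ _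
      have hkey' := hkey R hRge
      have hR1 : (1:ℝ) < R :=
        lt_of_lt_of_le (by norm_num) (le_trans (le_max_right _ _) hRge)
      have hlogR : 0 < Real.log R := Real.log_pos hR1
      have hTlog : T ≤ Real.log R := by
        have h1 : Real.exp T ≤ R := le_max_left _ _
        have := Real.log_le_log (Real.exp_pos T) h1
        rwa [Real.log_exp] at this
      -- w x₀ * log R ≤ M * L
      have h1 : w x₀ * Real.log R ≤ M * L := by
        have : w x₀ ≤ M * L / Real.log R := by
          rw [div_mul_eq_mul_div] at hkey'
          exact hkey'
        calc w x₀ * Real.log R ≤ (M * L / Real.log R) * Real.log R :=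
              mul_le_mul_of_nonneg_right this hlogR.le
        _ = M * L := by field_simp
      have h2 : w x₀ * T ≤ w x₀ * Real.log R := mul_le_mul_of_nonneg_left hTlog hpos.le
      have h3 : w x₀ * T = 2 * M * L + w x₀ := by
        have hw0 : w x₀ ≠ 0 := ne_of_gt hpos
        rw [hTdef]
        field_simp
      nlinarith
  -- decay hypotheses for v and -v
  have hvdec : Tendsto v (Bornology.cobounded (EuclideanSpace ℝ (Fin N))) (nhds 0) ∨
      (N = 2 ∧ ∃ M : ℝ, 0 ≤ M ∧ ∀ y : EuclideanSpace ℝ (Fin N), 1 ≤ ‖y‖ → |v y| ≤ M) := by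
    rcases eq_or_lt_of_le hN with h2 | h3
    · right
      refine ⟨h2.symm, ?_⟩
      obtain ⟨C, hC⟩ := hdecay2 h2.symm
      refine ⟨max C 0 + 1, by positivity, ?_⟩
      intro y hy
      have h1 : |u y| ≤ max C 0 := le_trans (hC y hy) (le_max_left _ _)
      have h2' : |Uref N y| ≤ 1 := Uref_bound2 h2.symm hy
      calc |v y| ≤ |u y| + |Uref N y| := by
            rw [hvdef]; exact abs_sub _ _
      _ ≤ max C 0 + 1 := add_le_add h1 h2'
    · left
      have h3' : 3 ≤ N := by omega
      have := (hdecay3 h3').sub (Uref_tendsto h3')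
      simpa [hvdef] using this
  have hside : ∀ x₀ : EuclideanSpace ℝ (Fin N), 1 ≤ ‖x₀‖ → v x₀ = 0 := by
    intro x₀ hx₀
    have h1 := hsuff v hvC hvlap hv1 hvdec x₀ hx₀
    have hnegC : ContDiffOn ℝ 2 (fun y => -(v y)) Ω := hvC.neg
    have hneglap : ∀ y : EuclideanSpace ℝ (Fin N), 1 < ‖y‖ → lap (fun y => -(v y)) y = 0 := by
      intro y hy
      have hyΩ : y ∈ Ω := hΩ1 (le_of_lt hy)
      have hrw : (fun y => -(v y)) = (fun y => (-1:ℝ) * v y) := by funext z; ring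
      rw [hrw, lap_const_mul hΩo hyΩ hvC (-1), hvlap y hy]
      ring
    have hneg1 : ∀ y : EuclideanSpace ℝ (Fin N), ‖y‖ = 1 → -(v y) = 0 := by
      intro y hy; rw [hv1 y hy]; ring
    have hnegdec : Tendsto (fun y => -(v y))
        (Bornology.cobounded (EuclideanSpace ℝ (Fin N))) (nhds 0) ∨
        (N = 2 ∧ ∃ M : ℝ, 0 ≤ M ∧
          ∀ y : EuclideanSpace ℝ (Fin N), 1 ≤ ‖y‖ → |-(v y)| ≤ M) := by
      rcases hvdec with hT | ⟨hN2, M, hM0, hMb⟩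
      · left; simpa using hT.neg
      · right
        exact ⟨hN2, M, hM0, fun y hy => by rw [abs_neg]; exact hMb y hy⟩
    have h2 := hsuff (fun y => -(v y)) hnegC hneglap hneg1 hnegdec x₀ hx₀
    linarith
  constructor
  · -- c = 1
    set x1 : EuclideanSpace ℝ (Fin N) := EuclideanSpace.single (⟨0, by omega⟩ : Fin N) (1:ℝ)
      with hx1def
    have hx1 : ‖x1‖ = 1 := by
      rw [hx1def, EuclideanSpace.norm_single]
      norm_num
    have hx1V : x1 ∈ V := hV (by rw [Set.mem_setOf_eq, hx1])
    have hudiff : DifferentiableAt ℝ u x1 :=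
      ((hu x1 hx1V).differentiableWithinAt (by norm_num)).differentiableAt
        (hVo.mem_nhds hx1V)
    have hUdiff : DifferentiableAt ℝ (Uref N) x1 :=
      (Uref_hasFDerivAt_boundary hx1).differentiableAt
    have hvdiff : DifferentiableAt ℝ v x1 := hudiff.sub hUdiff
    have hfv : fderiv ℝ v x1 = 0 := fderiv_eq_zero_of_boundary hx1 hvdiff hside
    have hsub : fderiv ℝ v x1 = fderiv ℝ u x1 - fderiv ℝ (Uref N) x1 := by
      rw [hvdef]
      exact fderiv_sub hudiff hUdiff
    have hfu : fderiv ℝ u x1 = (-1:ℝ) • innerSL ℝ x1 := by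
      have hU' : fderiv ℝ (Uref N) x1 = (-1:ℝ) • innerSL ℝ x1 :=
        (Uref_hasFDerivAt_boundary hx1).fderiv
      have h0 : fderiv ℝ u x1 - fderiv ℝ (Uref N) x1 = 0 := by rw [← hsub]; exact hfv
      have := sub_eq_zero.1 h0
      rw [this, hU']
    have hnorm : ‖fderiv ℝ u x1‖ = 1 := by
      rw [hfu, norm_smul]
      simp [innerSL_apply_norm, hx1]
    have hgrad : ‖gradient u x1‖ = ‖fderiv ℝ u x1‖ := by
      rw [gradient]
      exact LinearIsometryEquiv.norm_map _ _
    have hb := hbd1 x1 hx1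
    rw [hx1, Real.one_rpow, mul_one] at hb
    rw [hgrad, hnorm] at hb
    exact hb.symm
  · intro x hx
    have := hside x hx
    rw [hvdef] at this
    simp only [] at this
    have : u x = Uref N x := by linarith
    exact this
end
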